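/- Under the same hypotheses as the preceding statement (doubly stochastic A(t) with transition matrices satisfying |[Φ(t,s)]_{ij} − 1/N| ≤ Ĉ τ^{t−s} with Ĉ > 1, τ ∈ (0,1); ‖g_{i,t}(x)‖ ≤ C₁ on Ω_i; tracking updates z_{i,t} = Σ_j a_{ij}(t) y_{j,t}, y_{i,t+1} = z_{i,t} + N(g_{i,t+1}(x_{i,t+1}) − g_{i,t}(x_{i,t})), y_{i,1} = N g_{i,1}(x_{i,1})), define C = N Ĉ max_j ‖y_{j,1}‖ + 2N²τC₁Ĉ/(1−τ) + 3NC₁. Then for all i = 1,…,N and all t = 1,…,T: ‖y_{i,t}‖ ≤ C and ‖z_{i,t}‖ ≤ C. -/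

import Mathlib

/-- Uniform boundedness of the constraint-tracking variables: with
`C = N Ĉ max_j ‖y_{j,1}‖ + 2N²τC₁Ĉ/(1−τ) + 3NC₁`, one has `‖y_{i,t}‖ ≤ C` and
`‖z_{i,t}‖ ≤ C` for all `i = 1, …, N` and `t = 1, …, T`. -/
theorem stmt_4 (N n T : ℕ) (hN : 0 < N)
    (d : Fin N → ℕ)
    (Ω : ∀ i : Fin N, Set (EuclideanSpace ℝ (Fin (d i))))
    (Chat τ C₁ : ℝ) (hChat : 1 < Chat) (hτ0 : 0 < τ) (hτ1 : τ < 1) (hC₁ : 0 < C₁)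
    (A : ℕ → Matrix (Fin N) (Fin N) ℝ)
    (hA_nonneg : ∀ t, 1 ≤ t → ∀ i j, 0 ≤ A t i j)
    (hA_row : ∀ t, 1 ≤ t → ∀ i, ∑ j, A t i j = 1)
    (hA_col : ∀ t, 1 ≤ t → ∀ j, ∑ i, A t i j = 1)
    (Φ : ℕ → ℕ → Matrix (Fin N) (Fin N) ℝ)
    (hΦ_refl : ∀ s, Φ s s = 1)
    (hΦ_rec : ∀ t s, s ≤ t → Φ (t + 1) s = A t * Φ t s)
    (hΦ_bound : ∀ t s, 1 ≤ s → s ≤ t → ∀ i j,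
      |Φ t s i j - 1 / (N : ℝ)| ≤ Chat * τ ^ (t - s))
    (g : ∀ i : Fin N, ℕ → EuclideanSpace ℝ (Fin (d i)) → EuclideanSpace ℝ (Fin n))
    (hg : ∀ i t, 1 ≤ t → t ≤ T → ∀ w ∈ Ω i, ‖g i t w‖ ≤ C₁)
    (x : ∀ i : Fin N, ℕ → EuclideanSpace ℝ (Fin (d i)))
    (hx : ∀ i t, 1 ≤ t → t ≤ T → x i t ∈ Ω i)
    (y z : Fin N → ℕ → EuclideanSpace ℝ (Fin n))
    (hz : ∀ i t, 1 ≤ t → t ≤ T → z i t = ∑ j, A t i j • y j t)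
    (hy : ∀ i t, 1 ≤ t → t < T →
      y i (t + 1) = z i t + (N : ℝ) • (g i (t + 1) (x i (t + 1)) - g i t (x i t)))
    (hy1 : ∀ i, y i 1 = (N : ℝ) • g i 1 (x i 1)) :
    ∀ i, ∀ t, 1 ≤ t → t ≤ T →
      ‖y i t‖ ≤ N * Chat * (⨆ j, ‖y j 1‖) + 2 * N ^ 2 * τ * C₁ * Chat / (1 - τ) + 3 * N * C₁ ∧
      ‖z i t‖ ≤ N * Chat * (⨆ j, ‖y j 1‖) + 2 * N ^ 2 * τ * C₁ * Chat / (1 - τ) + 3 * N * C₁ := by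
  haveI : Nonempty (Fin N) := ⟨⟨0, hN⟩⟩
  set M := ⨆ j, ‖y j 1‖ with hMdef
  have hMle : ∀ j, ‖y j 1‖ ≤ M :=
    fun j => le_ciSup (f := fun j => ‖y j 1‖) (Set.Finite.bddAbove (Set.finite_range _)) j
  have hM0 : 0 ≤ M := le_trans (norm_nonneg _) (hMle ⟨0, hN⟩)
  have hN1 : (1:ℝ) ≤ N := by exact_mod_cast hN
  have hNne : (N:ℝ) ≠ 0 := by positivity
  have hτ' : (0:ℝ) < 1 - τ := by linarith
  set G : Fin N → ℕ → EuclideanSpace ℝ (Fin n) := fun j s => g j s (x j s) with hGdef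
  have hG : ∀ j s, 1 ≤ s → s ≤ T → ‖G j s‖ ≤ C₁ :=
    fun j s h1 h2 => hg j s h1 h2 _ (hx j s h1 h2)
  -- geometric sum lemma
  have hgeo : ∀ m : ℕ, ∑ s ∈ Finset.Ico 1 m, τ ^ (m - s) ≤ τ / (1 - τ) := by
    intro m
    induction m with
    | zero => simp; positivity
    | succ m ih =>
      rcases Nat.eq_zero_or_pos m with hm | hm
      · subst hm; simp; positivity
      · rw [Finset.sum_Ico_succ_top hm]
        have e : ∑ s ∈ Finset.Ico 1 m, τ ^ (m + 1 - s) =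
            τ * ∑ s ∈ Finset.Ico 1 m, τ ^ (m - s) := by
          rw [Finset.mul_sum]
          refine Finset.sum_congr rfl fun s hs => ?_
          simp only [Finset.mem_Ico] at hs
          rw [← pow_succ']
          congr 1
          omega
        rw [e]
        have h1 : τ * ∑ s ∈ Finset.Ico 1 m, τ ^ (m - s) ≤ τ * (τ / (1-τ)) :=
          mul_le_mul_of_nonneg_left ih (le_of_lt hτ0)
        have h2 : τ ^ (m + 1 - m) = τ := by
          have : m + 1 - m = 1 := by omega
          rw [this, pow_one]
        rw [h2]
        have h3 : τ * (τ / (1-τ)) + τ = τ / (1-τ) := by field_simp; ring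
        linarith
  -- telescoping lemma
  have tele : ∀ (f : ℕ → EuclideanSpace ℝ (Fin n)) (m : ℕ), 1 ≤ m →
      ∑ s ∈ Finset.Ico 1 m, (f (s+1) - f s) = f m - f 1 := by
    intro f m hm
    induction m with
    | zero => omega
    | succ m ih =>
      rcases Nat.eq_zero_or_pos m with h | h
      · subst h; simp
      · rw [Finset.sum_Ico_succ_top h, ih h]; abel
  -- matrix exchange lemma
  have exch : ∀ (B C : Matrix (Fin N) (Fin N) ℝ) (i : Fin N)
      (v : Fin N → EuclideanSpace ℝ (Fin n)),
      ∑ j, B i j • (∑ k, C j k • v k) = ∑ k, (B * C) i k • v k := by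
    intro B C i v
    simp only [Finset.smul_sum, smul_smul, Matrix.mul_apply, Finset.sum_smul]
    exact Finset.sum_comm
  -- key unrolling identity
  have key : ∀ t, 1 ≤ t → t ≤ T → ∀ i, y i t = ∑ j, Φ t 1 i j • y j 1 +
      (N : ℝ) • ∑ s ∈ Finset.Ico 1 t, ∑ j, Φ t (s+1) i j • (G j (s+1) - G j s) := by
    intro t ht
    induction t, ht using Nat.le_induction with
    | base =>
      intro _ i
      simp [hΦ_refl 1, Matrix.one_apply]
    | succ t ht ih =>
      intro htT i
      have h1 : y i (t+1) = z i t + (N : ℝ) • (G i (t + 1) - G i t) := hy i t ht (by omega)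
      have h2 : z i t = ∑ j, A t i j • y j t := hz i t ht (by omega)
      rw [h1, h2]
      have hsplit : ∑ j, A t i j • y j t =
          (∑ j, A t i j • ∑ k, Φ t 1 j k • y k 1) +
          (N : ℝ) • ∑ s ∈ Finset.Ico 1 t, ∑ j, A t i j •
            ∑ k, Φ t (s+1) j k • (G k (s+1) - G k s) := by
        have e1 : ∑ j, A t i j • y j t =
            (∑ j, A t i j • ∑ k, Φ t 1 j k • y k 1) +
            ∑ j, (N : ℝ) • ∑ s ∈ Finset.Ico 1 t, A t i j •
              ∑ k, Φ t (s+1) j k • (G k (s+1) - G k s) := by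
          rw [← Finset.sum_add_distrib]
          refine Finset.sum_congr rfl fun j _ => ?_
          rw [ih (by omega) j, smul_add, smul_comm, Finset.smul_sum]
          congr 2
          exact Finset.smul_sum
        rw [e1, ← Finset.smul_sum, Finset.sum_comm]
      rw [hsplit, exch, ← hΦ_rec t 1 (by omega)]
      have e2 : ∀ s ∈ Finset.Ico 1 t,
          ∑ j, A t i j • ∑ k, Φ t (s+1) j k • (G k (s+1) - G k s)
          = ∑ k, Φ (t+1) (s+1) i k • (G k (s+1) - G k s) := by
        intro s hs
        simp only [Finset.mem_Ico] at hs
        rw [exch, ← hΦ_rec t (s+1) (by omega)]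
      rw [Finset.sum_congr rfl e2]
      rw [Finset.sum_Ico_succ_top ht]
      have hlast : ∑ k, Φ (t+1) (t+1) i k • (G k (t+1) - G k t) = G i (t+1) - G i t := by
        simp [hΦ_refl (t+1), Matrix.one_apply]
      rw [smul_add, hlast]
      abel
  -- main bound on y
  have hybound : ∀ i, ∀ t, 1 ≤ t → t ≤ T → ‖y i t‖ ≤
      N * Chat * M + 2 * N ^ 2 * τ * C₁ * Chat / (1 - τ) + 3 * N * C₁ := by
    intro i t ht htT
    rcases Nat.lt_or_ge t 2 with h2 | h2
    · -- t = 1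
      have : t = 1 := by omega
      subst this
      have : ‖y i 1‖ ≤ M := hMle i
      have hrest : (0:ℝ) ≤ 2 * N ^ 2 * τ * C₁ * Chat / (1 - τ) + 3 * N * C₁ := by positivity
      have hNC : M ≤ N * Chat * M := by
        have h1 : (1:ℝ) * M ≤ (N * Chat) * M :=
          mul_le_mul_of_nonneg_right (by nlinarith) hM0
        linarith
      linarith
    · -- t = m + 1, m ≥ 1
      obtain ⟨m, rfl⟩ : ∃ m, t = m + 1 := ⟨t - 1, by omega⟩
      have hm : 1 ≤ m := by omega
      have hmT : m + 1 ≤ T := htT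
      -- deviations
      have decomp : y i (m+1) =
          (∑ j, (Φ (m+1) 1 i j - 1/(N:ℝ)) • y j 1) + (∑ j, G j m)
          + (N:ℝ) • (G i (m+1) - G i m)
          + (N:ℝ) • ∑ s ∈ Finset.Ico 1 m, ∑ j,
              (Φ (m+1) (s+1) i j - 1/(N:ℝ)) • (G j (s+1) - G j s) := by
        rw [key (m+1) (by omega) hmT i]
        rw [Finset.sum_Ico_succ_top hm]
        have hlast : ∑ j, Φ (m+1) (m+1) i j • (G j (m+1) - G j m) = G i (m+1) - G i m := by
          simp [hΦ_refl (m+1), Matrix.one_apply]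
        rw [hlast]
        have split1 : ∑ j, Φ (m+1) 1 i j • y j 1 =
            (∑ j, (Φ (m+1) 1 i j - 1/(N:ℝ)) • y j 1) + ∑ j, G j 1 := by
          rw [← Finset.sum_add_distrib]
          refine Finset.sum_congr rfl fun j _ => ?_
          rw [hy1 j]
          match_scalars
          field_simp
          ring
        have split2 : ∑ s ∈ Finset.Ico 1 m, ∑ j, Φ (m+1) (s+1) i j • (G j (s+1) - G j s) =
            (∑ s ∈ Finset.Ico 1 m, ∑ j,
              (Φ (m+1) (s+1) i j - 1/(N:ℝ)) • (G j (s+1) - G j s))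
            + (1/(N:ℝ)) • ∑ j, (G j m - G j 1) := by
          have e : ∀ s ∈ Finset.Ico 1 m,
              ∑ j, Φ (m+1) (s+1) i j • (G j (s+1) - G j s) =
              (∑ j, (Φ (m+1) (s+1) i j - 1/(N:ℝ)) • (G j (s+1) - G j s))
              + (1/(N:ℝ)) • ∑ j, (G j (s+1) - G j s) := by
            intro s _
            rw [Finset.smul_sum, ← Finset.sum_add_distrib]
            refine Finset.sum_congr rfl fun j _ => ?_
            match_scalars <;> ring
          rw [Finset.sum_congr rfl e, Finset.sum_add_distrib, ← Finset.smul_sum]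
          congr 1
          rw [Finset.sum_comm]
          congr 1
          refine Finset.sum_congr rfl fun j _ => ?_
          exact tele (fun s => G j s) m hm
        rw [split1, split2, smul_add, smul_add, smul_smul]
        have hNN : (N:ℝ) * (1/(N:ℝ)) = 1 := by field_simp
        rw [hNN, one_smul, Finset.sum_sub_distrib]
        abel
      -- now bound the four terms
      have hb1 : ‖∑ j, (Φ (m+1) 1 i j - 1/(N:ℝ)) • y j 1‖ ≤ N * Chat * M := by
        calc ‖∑ j, (Φ (m+1) 1 i j - 1/(N:ℝ)) • y j 1‖
            ≤ ∑ j, ‖(Φ (m+1) 1 i j - 1/(N:ℝ)) • y j 1‖ := norm_sum_le _ _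
          _ ≤ ∑ j : Fin N, Chat * M := by
              refine Finset.sum_le_sum fun j _ => ?_
              rw [norm_smul, Real.norm_eq_abs]
              have hb := hΦ_bound (m+1) 1 le_rfl (by omega) i j
              have he : (m + 1) - 1 = m := by omega
              rw [he] at hb
              have hτm : τ ^ m ≤ 1 := pow_le_one₀ (le_of_lt hτ0) (le_of_lt hτ1)
              have h1 : |Φ (m+1) 1 i j - 1/(N:ℝ)| ≤ Chat := by nlinarith
              have := hMle j
              exact mul_le_mul h1 this (norm_nonneg _) (by positivity)
          _ = N * Chat * M := by
              rw [Finset.sum_const, Finset.card_univ, Fintype.card_fin, nsmul_eq_mul]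
              ring
      have hb2 : ‖∑ j, G j m‖ ≤ N * C₁ := by
        calc ‖∑ j, G j m‖ ≤ ∑ j, ‖G j m‖ := norm_sum_le _ _
          _ ≤ ∑ j : Fin N, C₁ := Finset.sum_le_sum fun j _ => hG j m hm (by omega)
          _ = N * C₁ := by
              rw [Finset.sum_const, Finset.card_univ, Fintype.card_fin, nsmul_eq_mul]
      have hb3 : ‖(N:ℝ) • (G i (m+1) - G i m)‖ ≤ N * (2 * C₁) := by
        rw [norm_smul, Real.norm_eq_abs, abs_of_nonneg (by positivity : (0:ℝ) ≤ (N:ℝ))]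
        have h1 : ‖G i (m+1) - G i m‖ ≤ 2 * C₁ := by
          calc ‖G i (m+1) - G i m‖ ≤ ‖G i (m+1)‖ + ‖G i m‖ := norm_sub_le _ _
            _ ≤ 2 * C₁ := by
                have := hG i (m+1) (by omega) hmT
                have := hG i m hm (by omega)
                linarith
        exact mul_le_mul_of_nonneg_left h1 (by positivity)
      have hb4 : ‖(N:ℝ) • ∑ s ∈ Finset.Ico 1 m, ∑ j,
          (Φ (m+1) (s+1) i j - 1/(N:ℝ)) • (G j (s+1) - G j s)‖ ≤
          N * (N * Chat * (2 * C₁) * (τ / (1 - τ))) := by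
        rw [norm_smul, Real.norm_eq_abs, abs_of_nonneg (by positivity : (0:ℝ) ≤ (N:ℝ))]
        have hE : ‖∑ s ∈ Finset.Ico 1 m, ∑ j,
            (Φ (m+1) (s+1) i j - 1/(N:ℝ)) • (G j (s+1) - G j s)‖ ≤
            N * Chat * (2 * C₁) * (τ / (1 - τ)) := by
          calc ‖∑ s ∈ Finset.Ico 1 m, ∑ j,
              (Φ (m+1) (s+1) i j - 1/(N:ℝ)) • (G j (s+1) - G j s)‖
              ≤ ∑ s ∈ Finset.Ico 1 m, ‖∑ j,
                  (Φ (m+1) (s+1) i j - 1/(N:ℝ)) • (G j (s+1) - G j s)‖ := norm_sum_le _ _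
            _ ≤ ∑ s ∈ Finset.Ico 1 m, N * Chat * (2 * C₁) * τ ^ (m - s) := by
                refine Finset.sum_le_sum fun s hs => ?_
                simp only [Finset.mem_Ico] at hs
                calc ‖∑ j, (Φ (m+1) (s+1) i j - 1/(N:ℝ)) • (G j (s+1) - G j s)‖
                    ≤ ∑ j, ‖(Φ (m+1) (s+1) i j - 1/(N:ℝ)) • (G j (s+1) - G j s)‖ :=
                      norm_sum_le _ _
                  _ ≤ ∑ j : Fin N, Chat * τ ^ (m - s) * (2 * C₁) := by
                      refine Finset.sum_le_sum fun j _ => ?_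
                      rw [norm_smul, Real.norm_eq_abs]
                      have hb := hΦ_bound (m+1) (s+1) (by omega) (by omega) i j
                      have he : (m + 1) - (s + 1) = m - s := by omega
                      rw [he] at hb
                      have hD : ‖G j (s+1) - G j s‖ ≤ 2 * C₁ := by
                        calc ‖G j (s+1) - G j s‖ ≤ ‖G j (s+1)‖ + ‖G j s‖ := norm_sub_le _ _
                          _ ≤ 2 * C₁ := by
                              have := hG j (s+1) (by omega) (by omega)
                              have := hG j s (by omega) (by omega)
                              linarith
                      exact mul_le_mul hb hD (norm_nonneg _) (by positivity)
                  _ = N * Chat * (2 * C₁) * τ ^ (m - s) := by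
                      rw [Finset.sum_const, Finset.card_univ, Fintype.card_fin, nsmul_eq_mul]
                      ring
            _ = N * Chat * (2 * C₁) * ∑ s ∈ Finset.Ico 1 m, τ ^ (m - s) := by
                rw [Finset.mul_sum]
            _ ≤ N * Chat * (2 * C₁) * (τ / (1 - τ)) := by
                refine mul_le_mul_of_nonneg_left (hgeo m) ?_
                positivity
        exact mul_le_mul_of_nonneg_left hE (by positivity)
      have htotal : ‖y i (m+1)‖ ≤ N * Chat * M + N * C₁ + N * (2 * C₁)
          + N * (N * Chat * (2 * C₁) * (τ / (1 - τ))) := by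
        rw [decomp]
        refine le_trans (norm_add_le _ _) ?_
        refine le_trans (add_le_add (norm_add_le _ _) hb4) ?_
        refine le_trans (add_le_add_left (add_le_add (norm_add_le _ _) hb3) _) ?_
        exact add_le_add_left (add_le_add_left (add_le_add hb1 hb2) _) _
      have heq : N * (N * Chat * (2 * C₁) * (τ / (1 - τ))) =
          2 * N ^ 2 * τ * C₁ * Chat / (1 - τ) := by
        field_simp
      rw [heq] at htotal
      linarith
  intro i t ht htT
  refine ⟨hybound i t ht htT, ?_⟩
  rw [hz i t ht htT]
  calc ‖∑ j, A t i j • y j t‖ ≤ ∑ j, ‖A t i j • y j t‖ := norm_sum_le _ _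
    _ ≤ ∑ j, A t i j * (N * Chat * M + 2 * N ^ 2 * τ * C₁ * Chat / (1 - τ) + 3 * N * C₁) := by
        refine Finset.sum_le_sum fun j _ => ?_
        rw [norm_smul, Real.norm_eq_abs, abs_of_nonneg (hA_nonneg t ht i j)]
        exact mul_le_mul_of_nonneg_left (hybound j t ht htT) (hA_nonneg t ht i j)
    _ = N * Chat * M + 2 * N ^ 2 * τ * C₁ * Chat / (1 - τ) + 3 * N * C₁ := by
        rw [← Finset.sum_mul, hA_row t ht i, one_mul]
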